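/- Kepler's third law from the inverse-square law: let x : ℝ → ℝ² be a twice differentiable curve, K > 0, a > 0, T > 0, and f ∈ ℝ² with ‖f‖ < 2a. Assume: (i) x''(t) = −(K/‖x(t)‖³) • x(t) and x(t) ≠ 0 for all t; (ii) for every t, ‖x(t)‖ + ‖x(t) − f‖ = 2a (the orbit is an ellipse with semi-major axis a and one focus at the origin); (iii) for every t, x(t) × x'(t) = 2πab/T, where b := √(a² − ‖f‖²/4) (the area πab of the ellipse is swept in one period T). Then a³/T² = K/(4π²); equivalently, the ratio (2a)³/T² equals 2K/π² and hence is the same for every such orbit with the same force constant K. -/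

import Mathlib

noncomputable section

/-- Planar cross product `u × v = u₁v₂ − u₂v₁` on `ℝ²`. -/
def cross (u v : EuclideanSpace ℝ (Fin 2)) : ℝ := u 0 * v 1 - u 1 * v 0

set_option maxHeartbeats 1000000 in
private lemma norm_sq_two' (u : EuclideanSpace ℝ (Fin 2)) : ‖u‖^2 = u 0^2 + u 1^2 := by
  rw [EuclideanSpace.norm_eq, Real.sq_sqrt (by positivity)]
  simp [Fin.sum_univ_two, Real.norm_eq_abs, sq_abs]

private lemma kepler_alg (K a C h f0 f1 p1 p2 w1 w2 r : ℝ) (hane : a ≠ 0) (hrne : r ≠ 0)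
    (I1 : r = C + (p1 * f0 + p2 * f1) / (2 * a))
    (I2 : r ^ 2 = p1 ^ 2 + p2 ^ 2)
    (I3 : r * ((w1 * f0 + w2 * f1) / (2 * a)) = p1 * w1 + p2 * w2)
    (I5 : p1 * w2 - p2 * w1 = h)
    (I4 : (w1 * f0 + w2 * f1) / (2 * a) * ((w1 * f0 + w2 * f1) / (2 * a)) +
        r * ((-(K / r ^ 3) * p1 * f0 + -(K / r ^ 3) * p2 * f1) / (2 * a)) =
      w1 * w1 + p1 * (-(K / r ^ 3) * p1) + (w2 * w2 + p2 * (-(K / r ^ 3) * p2))) :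
    h ^ 2 = K * C := by
  field_simp at I1 I3 I4
  have hS : p1 * f0 + p2 * f1 = 2 * a * (r - C) := by linarith
  have M : ((w1 * f0 + w2 * f1) ^ 2 * r ^ 2 + 4 * a ^ 2 * K * C) * (2 * a * r ^ 7) =
      (4 * a ^ 2 * r ^ 2 * (w1 ^ 2 + w2 ^ 2)) * (2 * a * r ^ 7) := by
    linear_combination (2 * a * r ^ 6) * (I4 + (2 * a * K * r) * hS + (4 * a ^ 2 * K) * I2)
  have h2ar : 2 * a * r ^ 7 ≠ 0 :=
    mul_ne_zero (mul_ne_zero two_ne_zero hane) (pow_ne_zero _ hrne)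
  have key1 := mul_right_cancel₀ h2ar M
  have lag : (p1 * w1 + p2 * w2) ^ 2 + h ^ 2 = r ^ 2 * (w1 ^ 2 + w2 ^ 2) := by
    have e : (p1 * w1 + p2 * w2) ^ 2 + (p1 * w2 - p2 * w1) ^ 2 =
        (p1 ^ 2 + p2 ^ 2) * (w1 ^ 2 + w2 ^ 2) := by ring
    rw [I5, ← I2] at e
    exact e
  have key2 : (w1 * f0 + w2 * f1) ^ 2 * r ^ 2 = 4 * a ^ 2 * (p1 * w1 + p2 * w2) ^ 2 := by
    linear_combination (r * (w1 * f0 + w2 * f1) + (p1 * w1 + p2 * w2) * (2 * a)) * I3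
  have final : (h ^ 2 - K * C) * (4 * a ^ 2) = 0 := by
    linear_combination (-1 : ℝ) * key1 + key2 + (4 * a ^ 2) * lag
  have h4 : (4 : ℝ) * a ^ 2 ≠ 0 := by
    intro hz
    exact hane (by nlinarith [sq_nonneg a])
  rcases mul_eq_zero.mp final with h1 | h1
  · linarith
  · exact absurd h1 h4

private lemma kepler_fin (K a T B : ℝ) (ha : 0 < a) (hT : 0 < T) (hB : 0 < B)
    (key : (2 * Real.pi * a * Real.sqrt B / T) ^ 2 = K * (B / a)) :
    a ^ 3 / T ^ 2 = K / (4 * Real.pi ^ 2) := by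
  have hπ := Real.pi_pos
  have hs : Real.sqrt B ^ 2 = B := Real.sq_sqrt hB.le
  have e : (2 * Real.pi * a * Real.sqrt B) ^ 2 = 4 * Real.pi ^ 2 * a ^ 2 * B := by
    rw [mul_pow, hs]; ring
  rw [div_pow, e] at key
  have hBne := ne_of_gt hB
  have hTne := ne_of_gt hT
  have hane := ne_of_gt ha
  field_simp at key
  have hc : (4 * Real.pi ^ 2 * a ^ 3 - K * T ^ 2) * B = 0 := by linear_combination B * key
  rcases mul_eq_zero.mp hc with h1 | h1
  · field_simp
    linarith
  · exact absurd h1 hBne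

set_option maxHeartbeats 1000000 in
/-- Kepler's third law from the inverse-square law: for an elliptical orbit
(semi-major axis `a`, focus at the origin) obeying the area law with period
`T` under a centripetal inverse-square acceleration of constant `K`, one has
`a³/T² = K/(4π²)`; hence `(2a)³/T² = 2K/π²` is the same for all such orbits. -/
theorem kepler_third_law
    (x : ℝ → EuclideanSpace ℝ (Fin 2))
    (hx : Differentiable ℝ x) (hx' : Differentiable ℝ (deriv x))
    (K a T : ℝ) (hK : 0 < K) (ha : 0 < a) (hT : 0 < T)
    (f : EuclideanSpace ℝ (Fin 2)) (hf : ‖f‖ < 2 * a)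
    (hacc : ∀ t : ℝ, deriv (deriv x) t = (-(K / ‖x t‖ ^ 3)) • x t)
    (hne : ∀ t : ℝ, x t ≠ 0)
    (hellipse : ∀ t : ℝ, ‖x t‖ + ‖x t - f‖ = 2 * a)
    (harea : ∀ t : ℝ,
      cross (x t) (deriv x t) =
        2 * Real.pi * a * Real.sqrt (a ^ 2 - ‖f‖ ^ 2 / 4) / T) :
    a ^ 3 / T ^ 2 = K / (4 * Real.pi ^ 2) := by
  have hπ := Real.pi_pos
  have hane : a ≠ 0 := ne_of_gt ha
  set b2 : ℝ := a ^ 2 - ‖f‖ ^ 2 / 4 with hb2def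
  have hb2 : 0 < b2 := by
    have h0 := norm_nonneg f
    rw [hb2def]
    nlinarith [mul_lt_mul'' hf hf h0 h0]
  set C : ℝ := b2 / a with hCdef
  set h : ℝ := 2 * Real.pi * a * Real.sqrt b2 / T with hhdef
  have hfn : ‖f‖ ^ 2 = f 0 ^ 2 + f 1 ^ 2 := norm_sq_two' f
  have hxn : ∀ t, ‖x t‖ ^ 2 = x t 0 ^ 2 + x t 1 ^ 2 := fun t => norm_sq_two' (x t)
  have hxpos : ∀ t, 0 < ‖x t‖ := fun t => norm_pos_iff.mpr (hne t)
  set ρ : ℝ → ℝ := fun t => C + (x t 0 * f 0 + x t 1 * f 1) / (2 * a) with hρdef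
  have orbit : ∀ t, ‖x t‖ = ρ t := by
    intro t
    have e1 : ‖x t - f‖ = 2 * a - ‖x t‖ := by linarith [hellipse t]
    have e2 : ‖x t - f‖ ^ 2 = (2 * a - ‖x t‖) ^ 2 := by rw [e1]
    have e3 : ‖x t - f‖ ^ 2 = (x t 0 - f 0) ^ 2 + (x t 1 - f 1) ^ 2 := by
      have := norm_sq_two' (x t - f)
      simpa using this
    rw [e3] at e2
    have hxt := hxn t
    show ‖x t‖ = C + (x t 0 * f 0 + x t 1 * f 1) / (2 * a)
    rw [hCdef, hb2def]
    field_simp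
    nlinarith [e2, hxt, hfn]
  have hdx : ∀ (i : Fin 2) (t : ℝ), HasDerivAt (fun s => x s i) (deriv x t i) t := by
    intro i t
    have := (EuclideanSpace.proj i).hasFDerivAt.comp_hasDerivAt t (hx t).hasDerivAt
    exact this
  have hdv : ∀ (i : Fin 2) (t : ℝ),
      HasDerivAt (fun s => deriv x s i) (-(K / ‖x t‖ ^ 3) * x t i) t := by
    intro i t
    have h1 := (EuclideanSpace.proj i).hasFDerivAt.comp_hasDerivAt t (hx' t).hasDerivAt
    have h2 : deriv (deriv x) t i = -(K / ‖x t‖ ^ 3) * x t i := by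
      rw [hacc t]; simp
    rw [← h2]
    exact h1
  have hdρ : ∀ t, HasDerivAt ρ ((deriv x t 0 * f 0 + deriv x t 1 * f 1) / (2 * a)) t := by
    intro t
    exact ((((hdx 0 t).mul_const (f 0)).add ((hdx 1 t).mul_const (f 1))).div_const
      (2 * a)).const_add C
  have E1 : ∀ t, ρ t * ((deriv x t 0 * f 0 + deriv x t 1 * f 1) / (2 * a)) =
      x t 0 * deriv x t 0 + x t 1 * deriv x t 1 := by
    intro t
    have H1 : HasDerivAt (fun s => ρ s ^ 2)
        (2 * ρ t ^ 1 * ((deriv x t 0 * f 0 + deriv x t 1 * f 1) / (2 * a))) t :=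
      (hdρ t).pow 2
    have H2 : HasDerivAt (fun s => x s 0 ^ 2 + x s 1 ^ 2)
        (2 * x t 0 ^ 1 * deriv x t 0 + 2 * x t 1 ^ 1 * deriv x t 1) t :=
      ((hdx 0 t).pow 2).add ((hdx 1 t).pow 2)
    have hfe : (fun s => ρ s ^ 2) = fun s => x s 0 ^ 2 + x s 1 ^ 2 := by
      funext s
      rw [← orbit s, hxn s]
    rw [hfe] at H1
    have h3 := H1.unique H2
    nlinarith [h3]
  have E2 : ∀ t,
      (deriv x t 0 * f 0 + deriv x t 1 * f 1) / (2 * a) *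
          ((deriv x t 0 * f 0 + deriv x t 1 * f 1) / (2 * a)) +
        ρ t * ((-(K / ‖x t‖ ^ 3) * x t 0 * f 0 + -(K / ‖x t‖ ^ 3) * x t 1 * f 1) / (2 * a)) =
      (deriv x t 0 * deriv x t 0 + x t 0 * (-(K / ‖x t‖ ^ 3) * x t 0)) +
        (deriv x t 1 * deriv x t 1 + x t 1 * (-(K / ‖x t‖ ^ 3) * x t 1)) := by
    intro t
    have HL : HasDerivAt
        (fun s => ρ s * ((deriv x s 0 * f 0 + deriv x s 1 * f 1) / (2 * a)))
        ((deriv x t 0 * f 0 + deriv x t 1 * f 1) / (2 * a) *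
            ((deriv x t 0 * f 0 + deriv x t 1 * f 1) / (2 * a)) +
          ρ t * ((-(K / ‖x t‖ ^ 3) * x t 0 * f 0 + -(K / ‖x t‖ ^ 3) * x t 1 * f 1) / (2 * a))) t :=
      (hdρ t).mul ((((hdv 0 t).mul_const (f 0)).add ((hdv 1 t).mul_const (f 1))).div_const (2 * a))
    have HR : HasDerivAt (fun s => x s 0 * deriv x s 0 + x s 1 * deriv x s 1)
        ((deriv x t 0 * deriv x t 0 + x t 0 * (-(K / ‖x t‖ ^ 3) * x t 0)) +
          (deriv x t 1 * deriv x t 1 + x t 1 * (-(K / ‖x t‖ ^ 3) * x t 1))) t :=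
      ((hdx 0 t).mul (hdv 0 t)).add ((hdx 1 t).mul (hdv 1 t))
    have hfe : (fun s => ρ s * ((deriv x s 0 * f 0 + deriv x s 1 * f 1) / (2 * a))) =
        fun s => x s 0 * deriv x s 0 + x s 1 * deriv x s 1 := funext E1
    rw [hfe] at HL
    exact HL.unique HR
  have key : h ^ 2 = K * C := by
    have hI4 := E2 0
    rw [← orbit 0] at hI4
    have hI3 := E1 0
    rw [← orbit 0] at hI3
    have hI1 : ‖x 0‖ = C + (x 0 0 * f 0 + x 0 1 * f 1) / (2 * a) := orbit 0
    have hI5 : x 0 0 * deriv x 0 1 - x 0 1 * deriv x 0 0 = h := by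
      simpa [cross] using harea 0
    exact kepler_alg K a C h (f 0) (f 1) (x 0 0) (x 0 1) (deriv x 0 0) (deriv x 0 1)
      ‖x 0‖ hane (ne_of_gt (hxpos 0)) hI1 (hxn 0) hI3 hI5 hI4
  rw [hhdef, hCdef] at key
  exact kepler_fin K a T b2 ha hT hb2 key
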